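/- Let A, B ∈ ℝ^{n×n} with B invertible, N ≥ 1, and for each i = 1,…,N let Q_i ≻ 0 and P_i ≻ 0 be symmetric with P_i = Aᵀ P_i A - Aᵀ P_i B (Bᵀ P_i B)⁻¹ Bᵀ P_i A + Q_i, and K_i = -(Bᵀ P_i B)⁻¹ Bᵀ P_i A. Let X_{i-} ∈ ℝ^{n×T}, U_{i-} ∈ ℝ^{n×T} be data with X_{i+} := A X_{i-} + B U_{i-}; let G_i ∈ ℝ^{T×n} satisfy U_{i-} G_i = K_i and X_{i-} G_i = 0, and let 𝒰_i ∈ ℝ^{T×n} satisfy X_{i-} 𝒰_i = Iₙ and U_{i-} 𝒰_i = K_i. Set K₀ = (1/N)·Σ K_i, P = Σ P_i, W_i = X_{i+}𝒰_i - X_{i+}G_i, R = Σ_{i=1}^N [ G_iᵀ X_{i+}ᵀ P_i X_{i+} G_i + W_iᵀ (P - P_i) W_i ], and F = Σ_{i=1}^N [ Q_i + (P - P_i) ]. Then F is symmetric positive definite, and if L̄ ∈ ℝ^{N×N} is a matrix all of whose complex eigenvalues η satisfy |η - 1|² · σ_max( F^{-1/2} R F^{-1/2} ) < 1, then the matrix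 I_N ⊗ A + L̄ ⊗ (B K₀) is Schur stable. -/

import Mathlib

open Matrix
open scoped Kronecker Matrix.Norms.L2Operator

noncomputable section

section OldSqrt

open scoped ComplexOrder

/-- The positive semidefinite square root of a positive semidefinite matrix, as it was defined
in Mathlib (December 2024); it has since been removed from Mathlib. -/
def Matrix.PosSemidef.sqrt {n 𝕜 : Type*} [Fintype n] [DecidableEq n] [RCLike 𝕜]
    {A : Matrix n n 𝕜} (hA : A.PosSemidef) : Matrix n n 𝕜 :=
  (hA.1.eigenvectorUnitary : Matrix n n 𝕜) *
    diagonal (fun i => ((Real.sqrt (hA.1.eigenvalues i) : ℝ) : 𝕜)) *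
    (star hA.1.eigenvectorUnitary : Matrix n n 𝕜)

end OldSqrt

/-- A complex square matrix is Schur stable if every eigenvalue has modulus `< 1`. -/
def SchurStable {m : Type*} [Fintype m] [DecidableEq m] (M : Matrix m m ℂ) : Prop :=
  ∀ μ ∈ spectrum ℂ M, ‖μ‖ < 1

/-- A real square matrix is Schur stable if every complex eigenvalue has modulus `< 1`. -/
def SchurStableR {m : Type*} [Fintype m] [DecidableEq m] (M : Matrix m m ℝ) : Prop :=
  SchurStable (M.map Complex.ofReal)

section OldSqrtLemmas
open scoped ComplexOrder
lemma Matrix.PosSemidef.posSemidef_sqrt {n 𝕜 : Type*} [Fintype n] [DecidableEq n] [RCLike 𝕜]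
    {A : Matrix n n 𝕜} (hA : A.PosSemidef) : hA.sqrt.PosSemidef := by
  unfold Matrix.PosSemidef.sqrt
  apply Matrix.PosSemidef.mul_mul_conjTranspose_same
  rw [posSemidef_diagonal_iff]
  intro i
  exact_mod_cast Real.sqrt_nonneg _
lemma Matrix.PosSemidef.sqrt_mul_self {n 𝕜 : Type*} [Fintype n] [DecidableEq n] [RCLike 𝕜]
    {A : Matrix n n 𝕜} (hA : A.PosSemidef) : hA.sqrt * hA.sqrt = A := by
  unfold Matrix.PosSemidef.sqrt
  conv_rhs => rw [hA.1.spectral_theorem, Unitary.conjStarAlgAut_apply]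
  have hu : (star hA.1.eigenvectorUnitary : Matrix n n 𝕜) * (hA.1.eigenvectorUnitary : Matrix n n 𝕜) = 1 :=
    Unitary.coe_star_mul_self _
  simp only [Matrix.mul_assoc]
  rw [← Matrix.mul_assoc (star _ : Matrix n n 𝕜), hu, Matrix.one_mul, ← Matrix.mul_assoc (diagonal _),
    diagonal_mul_diagonal]
  congr 3
  funext i
  simp only [Function.comp_apply]
  rw [← RCLike.ofReal_mul, Real.mul_self_sqrt (hA.eigenvalues_nonneg i)]
end OldSqrtLemmas

lemma coe_ofRealHom_eq : ⇑Complex.ofRealHom = Complex.ofReal := rfl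

lemma map_ofReal_mul {a b c : Type*} [Fintype b] (M : Matrix a b ℝ) (X : Matrix b c ℝ) :
    (M * X).map Complex.ofReal = M.map Complex.ofReal * X.map Complex.ofReal := by
  rw [← coe_ofRealHom_eq, Matrix.map_mul]

lemma spec_eigvec {m : Type*} [Fintype m] [DecidableEq m] {M : Matrix m m ℂ} {μ : ℂ}
    (h : μ ∈ spectrum ℂ M) : ∃ v, v ≠ 0 ∧ M *ᵥ v = μ • v := by
  have h1 : ¬IsUnit (μ • (1 : Matrix m m ℂ) - M) := by
    simpa [Algebra.algebraMap_eq_smul_one] using spectrum.mem_iff.mp h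
  have h2 : (μ • (1 : Matrix m m ℂ) - M).det = 0 := by
    by_contra hd
    exact h1 ((Matrix.isUnit_iff_isUnit_det _).mpr (isUnit_iff_ne_zero.mpr hd))
  obtain ⟨v, hv0, hv⟩ := Matrix.exists_mulVec_eq_zero_iff.mpr h2
  refine ⟨v, hv0, ?_⟩
  rw [Matrix.sub_mulVec, sub_eq_zero, Matrix.smul_mulVec, Matrix.one_mulVec] at hv
  exact hv.symm

lemma real_conjTranspose {a b : Type*} (M : Matrix a b ℝ) : Mᴴ = Mᵀ := by
  ext i j; simp [Matrix.conjTranspose_apply]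

lemma dot_eq_normsq {n : ℕ} (u : Fin n → ℝ) :
    u ⬝ᵥ u = ‖(EuclideanSpace.equiv (Fin n) ℝ).symm u‖ ^ 2 := by
  rw [← real_inner_self_eq_norm_sq]
  rw [PiLp.inner_apply]; simp [dotProduct, EuclideanSpace.equiv, sq]

lemma mulvec_sq_bound {n : ℕ} (M : Matrix (Fin n) (Fin n) ℝ) (u : Fin n → ℝ) :
    (M *ᵥ u) ⬝ᵥ (M *ᵥ u) ≤ ‖M‖ ^ 2 * (u ⬝ᵥ u) := by
  have h := M.l2_opNorm_mulVec ((EuclideanSpace.equiv (Fin n) ℝ).symm u)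
  have h2 : (M *ᵥ u) ⬝ᵥ (M *ᵥ u)
      = ‖(EuclideanSpace.equiv (Fin n) ℝ).symm (M *ᵥ u)‖ ^ 2 := dot_eq_normsq _
  have h3 : u ⬝ᵥ u = ‖(EuclideanSpace.equiv (Fin n) ℝ).symm u‖ ^ 2 := dot_eq_normsq _
  rw [h2, h3]
  calc ‖(EuclideanSpace.equiv (Fin n) ℝ).symm (M *ᵥ u)‖ ^ 2
      ≤ (‖M‖ * ‖(EuclideanSpace.equiv (Fin n) ℝ).symm u‖) ^ 2 := by
        apply pow_le_pow_left₀ (norm_nonneg _)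
        · exact h
      _ = ‖M‖ ^ 2 * ‖(EuclideanSpace.equiv (Fin n) ℝ).symm u‖ ^ 2 := by ring

lemma eig_sq_le_norm {n : ℕ} (M : Matrix (Fin n) (Fin n) ℝ) (μ : ℂ) (v : Fin n → ℂ)
    (hv : v ≠ 0) (heig : (M.map Complex.ofReal) *ᵥ v = μ • v) :
    ‖μ‖ ^ 2 ≤ ‖M‖ ^ 2 := by
  classical
  set x : Fin n → ℝ := fun j => (v j).re with hx
  set y : Fin n → ℝ := fun j => (v j).im with hy
  have hre : M *ᵥ x = fun j => (μ * v j).re := by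
    funext j
    have := congrFun heig j
    simp only [Matrix.mulVec, dotProduct, Matrix.map_apply, Pi.smul_apply,
      smul_eq_mul] at this
    have := congrArg Complex.re this
    simpa [Complex.re_sum, Matrix.mulVec, dotProduct] using this
  have him : M *ᵥ y = fun j => (μ * v j).im := by
    funext j
    have := congrFun heig j
    simp only [Matrix.mulVec, dotProduct, Matrix.map_apply, Pi.smul_apply,
      smul_eq_mul] at this
    have := congrArg Complex.im this
    simpa [Complex.im_sum, Matrix.mulVec, dotProduct] using this
  have hb1 := mulvec_sq_bound M x
  have hb2 := mulvec_sq_bound M y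
  have hsum : (M *ᵥ x) ⬝ᵥ (M *ᵥ x) + (M *ᵥ y) ⬝ᵥ (M *ᵥ y)
      = Complex.normSq μ * (x ⬝ᵥ x + y ⬝ᵥ y) := by
    rw [hre, him]
    simp only [dotProduct, ← Finset.sum_add_distrib, Finset.mul_sum]
    refine Finset.sum_congr rfl fun j _ => ?_
    have : (μ * v j).re * (μ * v j).re + (μ * v j).im * (μ * v j).im
        = Complex.normSq (μ * v j) := by simp [Complex.normSq_apply]
    rw [this, Complex.normSq_mul]
    simp [hx, hy, Complex.normSq_apply]
  have hspos : 0 < x ⬝ᵥ x + y ⬝ᵥ y := by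
    obtain ⟨j, hj⟩ := Function.ne_iff.mp hv
    have hterm : 0 < Complex.normSq (v j) := Complex.normSq_pos.mpr hj
    have : x ⬝ᵥ x + y ⬝ᵥ y = ∑ j, Complex.normSq (v j) := by
      simp only [dotProduct, ← Finset.sum_add_distrib]
      exact Finset.sum_congr rfl fun j _ => by simp [hx, hy, Complex.normSq_apply]
    rw [this]
    exact Finset.sum_pos' (fun i _ => Complex.normSq_nonneg _) ⟨j, Finset.mem_univ j, hterm⟩
  have hkey : Complex.normSq μ * (x ⬝ᵥ x + y ⬝ᵥ y) ≤ ‖M‖ ^ 2 * (x ⬝ᵥ x + y ⬝ᵥ y) := by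
    rw [← hsum]
    calc (M *ᵥ x) ⬝ᵥ (M *ᵥ x) + (M *ᵥ y) ⬝ᵥ (M *ᵥ y)
        ≤ ‖M‖ ^ 2 * (x ⬝ᵥ x) + ‖M‖ ^ 2 * (y ⬝ᵥ y) := add_le_add hb1 hb2
      _ = ‖M‖ ^ 2 * (x ⬝ᵥ x + y ⬝ᵥ y) := by ring
  have h1 : Complex.normSq μ ≤ ‖M‖ ^ 2 := le_of_mul_le_mul_right
    (by simpa [mul_comm] using hkey) hspos
  calc ‖μ‖ ^ 2 = Complex.normSq μ := by
        rw [Complex.sq_norm]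
    _ ≤ ‖M‖ ^ 2 := h1

lemma eig_le_specrad {N n : ℕ} (C : Matrix (Fin N) (Fin N) ℂ) (E : Matrix (Fin n) (Fin n) ℂ)
    (Z : Matrix (Fin N) (Fin n) ℂ) (hZ : Z ≠ 0) (μ : ℂ) (hrel : C * Z * E = μ • Z) :
    (‖μ‖₊ : ENNReal) ≤ spectralRadius ℂ C * spectralRadius ℂ E := by
  have hpow : ∀ m : ℕ, C ^ m * Z * E ^ m = μ ^ m • Z := by
    intro m
    induction m with
    | zero => simp
    | succ m ih =>
      have : C ^ (m + 1) * Z * E ^ (m + 1) = C * (C ^ m * Z * E ^ m) * E := by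
        rw [pow_succ' C m, pow_succ E m]
        simp only [Matrix.mul_assoc]
      rw [this, ih, Matrix.mul_smul, Matrix.smul_mul, hrel, smul_smul, ← pow_succ]
  have hmm : ∀ m : ℕ, ‖μ‖₊ ^ m ≤ ‖C ^ m‖₊ * ‖E ^ m‖₊ := by
    intro m
    have h1 : ‖μ ^ m • Z‖₊ = ‖μ‖₊ ^ m * ‖Z‖₊ := by rw [nnnorm_smul, nnnorm_pow]
    have h2 : ‖C ^ m * Z * E ^ m‖₊ ≤ ‖C ^ m‖₊ * ‖Z‖₊ * ‖E ^ m‖₊ :=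
      le_trans (Matrix.l2_opNNNorm_mul _ _)
        (mul_le_mul_left (Matrix.l2_opNNNorm_mul _ _) _)
    have h3 : ‖μ‖₊ ^ m * ‖Z‖₊ ≤ (‖C ^ m‖₊ * ‖E ^ m‖₊) * ‖Z‖₊ := by
      rw [← h1, ← hpow m]
      calc ‖C ^ m * Z * E ^ m‖₊ ≤ ‖C ^ m‖₊ * ‖Z‖₊ * ‖E ^ m‖₊ := h2
        _ = (‖C ^ m‖₊ * ‖E ^ m‖₊) * ‖Z‖₊ := by ring
    exact le_of_mul_le_mul_right h3 (nnnorm_pos.mpr hZ)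
  have hCt := spectrum.pow_nnnorm_pow_one_div_tendsto_nhds_spectralRadius C
  have hEt := spectrum.pow_nnnorm_pow_one_div_tendsto_nhds_spectralRadius E
  have hfin : ∀ {k : ℕ} (X : Matrix (Fin k) (Fin k) ℂ), spectralRadius ℂ X ≠ ⊤ := by
    intro k X
    refine ne_top_of_le_ne_top ?_ (spectrum.spectralRadius_le_pow_nnnorm_pow_one_div ℂ X 0)
    exact ENNReal.mul_ne_top (ENNReal.rpow_ne_top_of_nonneg (by norm_num) ENNReal.coe_ne_top)
      (ENNReal.rpow_ne_top_of_nonneg (by norm_num) ENNReal.coe_ne_top)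
  have hCne : spectralRadius ℂ C ≠ ⊤ := hfin C
  have hEne : spectralRadius ℂ E ≠ ⊤ := hfin E
  have hprod := ENNReal.Tendsto.mul hCt (Or.inr hEne) hEt (Or.inr hCne)
  refine ge_of_tendsto hprod ?_
  filter_upwards [Filter.eventually_ge_atTop 1] with m hm
  have hm0 : (m : ℝ) ≠ 0 := Nat.cast_ne_zero.mpr (by omega)
  have hbase : (‖μ‖₊ : ENNReal) = ((‖μ‖₊ ^ m : NNReal) : ENNReal) ^ (1 / (m : ℝ)) := by
    rw [ENNReal.coe_pow, ← ENNReal.rpow_natCast, ← ENNReal.rpow_mul]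
    rw [mul_one_div, div_self hm0, ENNReal.rpow_one]
  rw [hbase]
  calc ((‖μ‖₊ ^ m : NNReal) : ENNReal) ^ (1 / (m : ℝ))
      ≤ ((‖C ^ m‖₊ * ‖E ^ m‖₊ : NNReal) : ENNReal) ^ (1 / (m : ℝ)) := by
        apply ENNReal.rpow_le_rpow (by exact_mod_cast hmm m) (by positivity)
    _ = (‖C ^ m‖₊ : ENNReal) ^ (1 / (m : ℝ)) * (‖E ^ m‖₊ : ENNReal) ^ (1 / (m : ℝ)) := by
        rw [ENNReal.coe_mul, ENNReal.mul_rpow_of_nonneg _ _ (by positivity)]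

lemma kron_eig_matrix {N n : ℕ} (C : Matrix (Fin N) (Fin N) ℂ) (D : Matrix (Fin n) (Fin n) ℂ)
    (μ : ℂ) (h : μ ∈ spectrum ℂ (C ⊗ₖ D)) :
    ∃ Z : Matrix (Fin N) (Fin n) ℂ, Z ≠ 0 ∧ C * Z * Dᵀ = μ • Z := by
  obtain ⟨z, hz0, hz⟩ := spec_eigvec h
  obtain ⟨p, hp⟩ := Function.ne_iff.mp hz0
  refine ⟨Matrix.of (fun k l => z (k, l)), ?_, ?_⟩
  · intro hZ0
    exact hp (by simpa using congrFun (congrFun hZ0 p.1) p.2)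
  · ext i j
    have hij := congrFun hz (i, j)
    simp only [Matrix.mulVec, dotProduct, Pi.smul_apply, smul_eq_mul] at hij
    rw [Fintype.sum_prod_type] at hij
    simp only [Matrix.kroneckerMap_apply] at hij
    simp only [Matrix.mul_apply, Matrix.transpose_apply, Matrix.of_apply,
      Matrix.smul_apply, smul_eq_mul, Finset.sum_mul]
    rw [Finset.sum_comm, ← hij]
    refine Finset.sum_congr rfl fun k _ => Finset.sum_congr rfl fun l _ => by ring

/-- Lemma 2 of the paper: the data-based consensus region
`|η-1|² < 1/σ_max(F^{-1/2} R F^{-1/2})` guarantees that the averaged data-based gain `K₀`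
renders `I_N ⊗ A + L̄ ⊗ B K₀` Schur stable.  Here `σ_max` is the largest singular value,
realized as the L2 operator norm `‖·‖`, and `F^{-1/2}` is the inverse of the positive
semidefinite square root of `F`. -/
theorem data_driven_consensus_region {n T N : ℕ} (hN : 1 ≤ N)
    (A B : Matrix (Fin n) (Fin n) ℝ) (hB : IsUnit B)
    (Q P : Fin N → Matrix (Fin n) (Fin n) ℝ)
    (hQ : ∀ i, (Q i).PosDef) (hP : ∀ i, (P i).PosDef)
    (hric : ∀ i, P i =
      Aᵀ * P i * A - Aᵀ * P i * B * (Bᵀ * P i * B)⁻¹ * Bᵀ * P i * A + Q i)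
    (K : Fin N → Matrix (Fin n) (Fin n) ℝ)
    (hK : ∀ i, K i = -((Bᵀ * P i * B)⁻¹ * Bᵀ * P i * A))
    (Xminus Uminus Xplus : Fin N → Matrix (Fin n) (Fin T) ℝ)
    (hXplus : ∀ i, Xplus i = A * Xminus i + B * Uminus i)
    (G 𝒰 : Fin N → Matrix (Fin T) (Fin n) ℝ)
    (hG1 : ∀ i, Uminus i * G i = K i) (hG2 : ∀ i, Xminus i * G i = 0)
    (h𝒰1 : ∀ i, Xminus i * 𝒰 i = 1) (h𝒰2 : ∀ i, Uminus i * 𝒰 i = K i)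
    (K₀ Psum : Matrix (Fin n) (Fin n) ℝ)
    (hK₀ : K₀ = (1 / (N : ℝ)) • ∑ i, K i) (hPsum : Psum = ∑ i, P i)
    (W : Fin N → Matrix (Fin n) (Fin n) ℝ)
    (hW : ∀ i, W i = Xplus i * 𝒰 i - Xplus i * G i)
    (R F : Matrix (Fin n) (Fin n) ℝ)
    (hR : R = ∑ i, ((G i)ᵀ * (Xplus i)ᵀ * P i * Xplus i * G i + (W i)ᵀ * (Psum - P i) * W i))
    (hF : F = ∑ i, (Q i + (Psum - P i))) :
    F.PosDef ∧
      ∀ (hFsd : F.PosSemidef) (Lbar : Matrix (Fin N) (Fin N) ℝ),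
        (∀ η ∈ spectrum ℂ (Lbar.map Complex.ofReal),
            Complex.normSq (η - 1) * ‖hFsd.sqrt⁻¹ * R * hFsd.sqrt⁻¹‖ < 1) →
        SchurStableR ((1 : Matrix (Fin N) (Fin N) ℝ) ⊗ₖ A + Lbar ⊗ₖ (B * K₀)) := by
  classical
  have hNpos : 0 < (N : ℝ) := by exact_mod_cast Nat.lt_of_lt_of_le Nat.zero_lt_one hN
  haveI hNe : Nonempty (Fin N) := ⟨⟨0, by omega⟩⟩
  have hdB : IsUnit B.det := (Matrix.isUnit_iff_isUnit_det B).mp hB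
  have hdBt : IsUnit Bᵀ.det := by rwa [Matrix.det_transpose]
  have hdP : ∀ i, IsUnit (P i).det := fun i => isUnit_iff_ne_zero.mpr (hP i).det_pos.ne'
  have hinv : ∀ i, (Bᵀ * P i * B)⁻¹ = B⁻¹ * ((P i)⁻¹ * Bᵀ⁻¹) := fun i => by
    rw [Matrix.mul_inv_rev, Matrix.mul_inv_rev]
  have hBK : ∀ i, B * K i = -A := by
    intro i
    rw [hK i, Matrix.mul_neg, hinv i]
    simp only [Matrix.mul_assoc]
    rw [Matrix.mul_nonsing_inv_cancel_left _ _ hdB,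
      Matrix.nonsing_inv_mul_cancel_left _ _ hdBt,
      Matrix.nonsing_inv_mul_cancel_left _ _ (hdP i)]
  have hQP : ∀ i, Q i = P i := by
    intro i
    have h := hric i
    have hX : Aᵀ * P i * A - Aᵀ * P i * B * (Bᵀ * P i * B)⁻¹ * Bᵀ * P i * A = 0 := by
      rw [hinv i]
      simp only [Matrix.mul_assoc]
      rw [Matrix.mul_nonsing_inv_cancel_left _ _ hdB,
        Matrix.nonsing_inv_mul_cancel_left _ _ hdBt,
        Matrix.nonsing_inv_mul_cancel_left _ _ (hdP i), sub_self]
    rw [sub_eq_zero] at hX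
    rw [← hX, sub_self, zero_add] at h
    exact h.symm
  have hXG : ∀ i, Xplus i * G i = -A := by
    intro i
    rw [hXplus i, Matrix.add_mul, Matrix.mul_assoc, Matrix.mul_assoc, hG2 i, hG1 i,
      Matrix.mul_zero, zero_add, hBK i]
  have hX𝒰 : ∀ i, Xplus i * 𝒰 i = 0 := by
    intro i
    rw [hXplus i, Matrix.add_mul, Matrix.mul_assoc, Matrix.mul_assoc, h𝒰1 i, h𝒰2 i,
      Matrix.mul_one, hBK i, add_neg_cancel]
  have hWA : ∀ i, W i = A := by
    intro i
    rw [hW i, hX𝒰 i, hXG i]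
    simp
  have hRe : R = (N : ℝ) • (Aᵀ * (Psum * A)) := by
    have hterm : ∀ i : Fin N,
        (G i)ᵀ * (Xplus i)ᵀ * P i * Xplus i * G i + (W i)ᵀ * (Psum - P i) * W i
          = Aᵀ * (Psum * A) := by
      intro i
      rw [show (G i)ᵀ * (Xplus i)ᵀ = (Xplus i * G i)ᵀ from (Matrix.transpose_mul _ _).symm,
        Matrix.mul_assoc ((Xplus i * G i)ᵀ * P i) (Xplus i) (G i), hXG i, hWA i]
      have hsub : Aᵀ * (Psum - P i) * A = Aᵀ * Psum * A - Aᵀ * P i * A := by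
        rw [Matrix.mul_sub, Matrix.sub_mul]
      rw [hsub]
      simp only [Matrix.transpose_neg, Matrix.neg_mul, Matrix.mul_neg, neg_neg,
        Matrix.mul_assoc]
      abel
    rw [hR, Finset.sum_congr rfl fun i _ => hterm i, Finset.sum_const, Finset.card_univ,
      Fintype.card_fin, ← Nat.cast_smul_eq_nsmul ℝ]
  have hFe : F = (N : ℝ) • Psum := by
    have hterm : ∀ i : Fin N, Q i + (Psum - P i) = Psum := by
      intro i; rw [hQP i]; abel
    rw [hF, Finset.sum_congr rfl fun i _ => hterm i, Finset.sum_const, Finset.card_univ,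
      Fintype.card_fin, ← Nat.cast_smul_eq_nsmul ℝ]
  have hPsumPD : Psum.PosDef := by
    rw [hPsum]
    refine Matrix.PosDef.of_dotProduct_mulVec_pos ?_ ?_
    · have hth : ∀ i : Fin N, (P i)ᵀ = P i := fun i => by
        rw [← real_conjTranspose]; exact (hP i).1
      show (∑ i, P i)ᴴ = ∑ i, P i
      rw [real_conjTranspose, Matrix.transpose_sum]
      exact Finset.sum_congr rfl fun i _ => hth i
    · intro x hx
      have hmv : (∑ i, P i) *ᵥ x = ∑ i, (P i *ᵥ x) := by
        ext j
        simp only [Matrix.mulVec, dotProduct, Matrix.sum_apply, Finset.sum_apply,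
          Finset.sum_mul]
        exact Finset.sum_comm
      have hds : star x ⬝ᵥ ∑ i, (P i *ᵥ x) = ∑ i, star x ⬝ᵥ (P i *ᵥ x) := by
        simp only [dotProduct, Finset.sum_apply, Finset.mul_sum]
        exact Finset.sum_comm
      rw [hmv, hds]
      exact Finset.sum_pos (fun i _ => (hP i).dotProduct_mulVec_pos hx) Finset.univ_nonempty
  have hFPD : F.PosDef := by
    rw [hFe]
    have hPsT : Psumᵀ = Psum := by rw [← real_conjTranspose]; exact hPsumPD.1
    refine Matrix.PosDef.of_dotProduct_mulVec_pos ?_ ?_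
    · show ((N : ℝ) • Psum)ᴴ = (N : ℝ) • Psum
      rw [real_conjTranspose, Matrix.transpose_smul, hPsT]
    · intro x hx
      rw [Matrix.smul_mulVec, dotProduct_smul]
      exact mul_pos hNpos (hPsumPD.dotProduct_mulVec_pos hx)
  refine ⟨hFPD, ?_⟩
  intro hFsd Lbar hL
  set Fs := hFsd.sqrt with hFsDef
  have hFF : Fs * Fs = F := hFsd.sqrt_mul_self
  have hFsH : Fsᵀ = Fs := by
    rw [← real_conjTranspose Fs]
    exact hFsd.posSemidef_sqrt.isHermitian
  have hFsdet : IsUnit Fs.det := by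
    have hd : Fs.det * Fs.det = F.det := by rw [← Matrix.det_mul, hFF]
    have hFne : F.det ≠ 0 := hFPD.det_pos.ne'
    refine isUnit_iff_ne_zero.mpr fun h0 => hFne ?_
    rw [← hd, h0, mul_zero]
  have hFsinvT : (Fs⁻¹)ᵀ = Fs⁻¹ := by rw [Matrix.transpose_nonsing_inv, hFsH]
  have hFsmul : Fs * Fs⁻¹ = 1 := Matrix.mul_nonsing_inv _ hFsdet
  set At := Fs * A * Fs⁻¹ with hAt
  have hAtT : Atᵀ = Fs⁻¹ * Aᵀ * Fs := by
    rw [hAt, Matrix.transpose_mul, Matrix.transpose_mul, hFsinvT, hFsH, Matrix.mul_assoc]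
  have hSA : Fs⁻¹ * R * Fs⁻¹ = Atᵀ * At := by
    rw [hAtT, hAt, hRe]
    have h1 : Fs⁻¹ * Aᵀ * Fs * (Fs * A * Fs⁻¹)
        = Fs⁻¹ * (Aᵀ * ((Fs * Fs) * (A * Fs⁻¹))) := by
      simp only [Matrix.mul_assoc]
    rw [h1, hFF, hFe]
    simp only [Matrix.smul_mul, Matrix.mul_smul, Matrix.mul_assoc]
  have hnormS : ‖Fs⁻¹ * R * Fs⁻¹‖ = ‖At‖ * ‖At‖ := by
    rw [hSA, ← real_conjTranspose At, Matrix.l2_opNorm_conjTranspose_mul_self]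
  -- spectral bound on the A side
  have hEbound : ∀ β ∈ spectrum ℂ ((Aᵀ).map Complex.ofReal), ‖β‖ ^ 2 ≤ ‖At‖ ^ 2 := by
    intro β hβ
    obtain ⟨v, hv0, hv⟩ := spec_eigvec hβ
    set Tt := Fs⁻¹ * Aᵀ * Fs with hTt
    set w := (Fs⁻¹.map Complex.ofReal) *ᵥ v with hw
    have hFsinvdet : IsUnit (Fs⁻¹).det := Matrix.isUnit_nonsing_inv_det _ hFsdet
    have hw0 : w ≠ 0 := by
      intro h0
      have hdet0 : ((Fs⁻¹).map Complex.ofReal).det = 0 :=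
        Matrix.exists_mulVec_eq_zero_iff.mp ⟨v, hv0, by rw [← hw, h0]⟩
      have hmd := RingHom.map_det Complex.ofRealHom Fs⁻¹
      rw [RingHom.mapMatrix_apply, coe_ofRealHom_eq] at hmd
      rw [← hmd] at hdet0
      exact hFsinvdet.ne_zero (by exact_mod_cast hdet0)
    have hTF : Tt * Fs⁻¹ = Fs⁻¹ * Aᵀ := by
      rw [hTt, Matrix.mul_assoc, Matrix.mul_assoc, hFsmul, Matrix.mul_one]
    have hrel : (Tt.map Complex.ofReal) *ᵥ w = β • w := by
      rw [hw, Matrix.mulVec_mulVec, ← map_ofReal_mul, hTF, map_ofReal_mul,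
        ← Matrix.mulVec_mulVec, hv, Matrix.mulVec_smul]
    have h2 := eig_sq_le_norm Tt β w hw0 hrel
    have hTtT : Ttᵀ = At := by
      rw [← hAtT, Matrix.transpose_transpose]
    have hTn : ‖Tt‖ = ‖At‖ := by
      rw [← hTtT, ← real_conjTranspose, Matrix.l2_opNorm_conjTranspose]
    rwa [hTn] at h2
  -- spectrum of the (1 - Lbar) side
  set Cc := ((1 : Matrix (Fin N) (Fin N) ℝ) - Lbar).map Complex.ofReal with hCcDef
  have hCmem : ∀ α ∈ spectrum ℂ Cc, ‖α‖ ^ 2 * ‖Fs⁻¹ * R * Fs⁻¹‖ < 1 := by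
    intro α hα
    have hCc1 : Cc = (algebraMap ℂ (Matrix (Fin N) (Fin N) ℂ)) 1 - Lbar.map Complex.ofReal := by
      ext i j
      simp [hCcDef, Matrix.map_apply, Matrix.sub_apply, Matrix.one_apply,
        Matrix.algebraMap_matrix_apply, apply_ite Complex.ofReal]
    rw [hCc1, ← spectrum.singleton_sub_eq] at hα
    obtain ⟨a, ha, b, hb, hab⟩ := Set.mem_sub.mp hα
    rw [Set.mem_singleton_iff] at ha
    subst ha
    have hL' := hL b hb
    have hnq : Complex.normSq (b - 1) = ‖α‖ ^ 2 := by
      rw [← hab, ← Complex.normSq_neg, neg_sub, Complex.sq_norm]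
    rwa [hnq] at hL'
  -- the closed-loop matrix is (1 - Lbar) ⊗ A
  have hBK0 : B * K₀ = -A := by
    rw [hK₀, Matrix.mul_smul, Finset.mul_sum,
      Finset.sum_congr rfl fun i (_ : i ∈ Finset.univ) => hBK i, Finset.sum_const,
      Finset.card_univ, Fintype.card_fin, ← Nat.cast_smul_eq_nsmul ℝ, smul_smul]
    rw [show (1 / (N : ℝ)) * (N : ℝ) = 1 from by field_simp, one_smul]
  show SchurStable _
  intro μ hμ
  have hmat : (((1 : Matrix (Fin N) (Fin N) ℝ) ⊗ₖ A + Lbar ⊗ₖ (B * K₀)).map Complex.ofReal)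
      = Cc ⊗ₖ (A.map Complex.ofReal) := by
    ext ⟨i, j⟩ ⟨k, l⟩
    simp only [Matrix.map_apply, Matrix.add_apply, Matrix.kroneckerMap_apply, hBK0,
      Matrix.neg_apply, Matrix.sub_apply, Matrix.one_apply, hCcDef]
    push_cast
    split_ifs <;> ring
  rw [hmat] at hμ
  obtain ⟨Z, hZ0, hrelZ⟩ := kron_eig_matrix _ _ μ hμ
  have hmapT : (A.map Complex.ofReal)ᵀ = (Aᵀ).map Complex.ofReal := by
    ext i j; simp [Matrix.map_apply]
  rw [hmapT] at hrelZ
  have hbig := eig_le_specrad Cc ((Aᵀ).map Complex.ofReal) Z hZ0 μ hrelZ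
  have hσnn : (0 : ℝ) ≤ ‖Fs⁻¹ * R * Fs⁻¹‖ := norm_nonneg _
  rcases (spectrum ℂ Cc).eq_empty_or_nonempty with he | hne
  · have hzero : spectralRadius ℂ Cc = 0 := by
      simp [spectralRadius, he]
    rw [hzero, zero_mul] at hbig
    have : ‖μ‖₊ = 0 := by exact_mod_cast le_antisymm (by exact_mod_cast hbig) zero_le
    have h0 : ‖μ‖ = 0 := by
      rw [← coe_nnnorm, this, NNReal.coe_zero]
    rw [h0]; norm_num
  · obtain ⟨α₀, hα₀mem, hmax⟩ :=
      Set.Finite.exists_maximalFor (fun z => ‖z‖) _ (Set.toFinite _) hne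
    have hmax' : ∀ k ∈ spectrum ℂ Cc, ‖k‖ ≤ ‖α₀‖ := by
      intro k hk
      rcases le_total ‖k‖ ‖α₀‖ with h | h
      · exact h
      · exact hmax hk h
    have hρC : spectralRadius ℂ Cc ≤ (‖α₀‖₊ : ENNReal) := by
      refine iSup₂_le fun k hk => ?_
      exact_mod_cast hmax' k hk
    set s : ℝ := Real.sqrt ‖Fs⁻¹ * R * Fs⁻¹‖ with hs
    have hsnn : 0 ≤ s := Real.sqrt_nonneg _
    have hssq : s ^ 2 = ‖Fs⁻¹ * R * Fs⁻¹‖ := Real.sq_sqrt hσnn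
    have hρE : spectralRadius ℂ ((Aᵀ).map Complex.ofReal) ≤ (s.toNNReal : ENNReal) := by
      refine iSup₂_le fun β hβ => ?_
      have h1 : ‖β‖ ^ 2 ≤ s ^ 2 := by
        rw [hssq, hnormS]
        calc ‖β‖ ^ 2 ≤ ‖At‖ ^ 2 := hEbound β hβ
          _ = ‖At‖ * ‖At‖ := sq ‖At‖ ▸ by ring
      have h2 : ‖β‖ ≤ s := by nlinarith [norm_nonneg β]
      have : ‖β‖₊ ≤ s.toNNReal := by
        rw [← Real.toNNReal_coe (r := ‖β‖₊)]
        exact Real.toNNReal_mono h2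
      exact_mod_cast this
    have hfinal : (‖μ‖₊ : ENNReal) ≤ ((‖α₀‖₊ * s.toNNReal : NNReal) : ENNReal) := by
      rw [ENNReal.coe_mul]
      exact hbig.trans (mul_le_mul' hρC hρE)
    have hfinal2 : ‖μ‖ ≤ ‖α₀‖ * s := by
      have h3 : ‖μ‖₊ ≤ ‖α₀‖₊ * s.toNNReal := by exact_mod_cast hfinal
      have h4 := NNReal.coe_le_coe.mpr h3
      rwa [NNReal.coe_mul, coe_nnnorm, coe_nnnorm, Real.coe_toNNReal _ hsnn] at h4
    have hlt := hCmem α₀ hα₀mem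
    nlinarith [norm_nonneg α₀, norm_nonneg μ, hssq]
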